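/- Let (Ω, ℱ, P) be a probability space, S and T measurable spaces, ρ a probability measure on S, μ a probability measure on T, and φ : S × T → ℝ a bounded measurable function. Let N, K ≥ 1, let X_1, …, X_N be random variables with values in S each with law ρ, let W_1, …, W_K be random variables with values in T each with law μ, and assume the family (X_1, …, X_N, W_1, …, W_K) is mutually independent. Define m_θ(s) = ∫_T φ(s,t) dμ(t) and m_ω(t) = ∫_S φ(s,t) dρ(s). Then Var[ (1/(NK)) ∑_{i=1}^N ∑_{k=1}^K φ(X_i, W_k) ] = (1/(NK)) · Var_{ρ⊗μ}[φ] + (1/N − 1/(NK)) · Var_ρ[m_θ] + (1/K − 1/(NK)) · Var_μ[m_ω]. -/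

import Mathlib

open MeasureTheory ProbabilityTheory

universe u

private lemma int_of_bdd {α : Type*} [MeasurableSpace α] (ν : Measure α) [IsFiniteMeasure ν]
    {f : α → ℝ} (hf : Measurable f) {C : ℝ} (h : ∀ a, |f a| ≤ C) : Integrable f ν := by
  refine ⟨hf.aestronglyMeasurable, ?_⟩
  exact HasFiniteIntegral.of_bounded (C := C)
    (Filter.Eventually.of_forall (by simpa [Real.norm_eq_abs] using h))

private lemma cnt {n : ℕ} (u v : ℝ) :
    ∑ a : Fin n, ∑ b : Fin n, (if a = b then u else v) = n * u + ((n:ℝ)^2 - n) * v := by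
  have h : ∀ a : Fin n, ∑ b : Fin n, (if a = b then u else v) = (u - v) + n * v := by
    intro a
    have : ∀ b : Fin n, (if a = b then u else v) = (if a = b then u - v else 0) + v := by
      intro b; by_cases hb : a = b <;> simp [hb]
    simp only [this, Finset.sum_add_distrib, Finset.sum_ite_eq, Finset.mem_univ, if_true,
      Finset.sum_const, Finset.card_univ, Fintype.card_fin, nsmul_eq_mul]
  simp only [h, Finset.sum_const, Finset.card_univ, Fintype.card_fin, nsmul_eq_mul]
  ring

/-- Variance of the Monte Carlo estimator
`Î₂ = (1/(NK)) ∑_i ∑_k φ(X_i, W_k)` in which all samples `X_i ∼ ρ` share the same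
samples `W_k ∼ μ`, the whole family being mutually independent. -/
theorem stmt_12 {Ω : Type*} {S T : Type u}
    [MeasurableSpace Ω] [MeasurableSpace S] [MeasurableSpace T]
    (P : Measure Ω) [IsProbabilityMeasure P]
    (ρ : Measure S) [IsProbabilityMeasure ρ]
    (μ : Measure T) [IsProbabilityMeasure μ]
    (φ : S × T → ℝ) (hφ_meas : Measurable φ) (hφ_bdd : ∃ M : ℝ, ∀ p, |φ p| ≤ M)
    (N K : ℕ) (hN : 1 ≤ N) (hK : 1 ≤ K)
    (X : Fin N → Ω → S) (W : Fin K → Ω → T)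
    (hX : ∀ i, Measurable (X i) ∧ Measure.map (X i) P = ρ)
    (hW : ∀ k, Measurable (W k) ∧ Measure.map (W k) P = μ)
    (hindep : iIndepFun
      (m := fun i : Fin N ⊕ Fin K =>
        Sum.rec (motive := fun i => MeasurableSpace (Sum.elim (fun _ => S) (fun _ => T) i))
          (fun _ => (inferInstance : MeasurableSpace S))
          (fun _ => (inferInstance : MeasurableSpace T)) i)
      (fun i => Sum.rec (motive := fun i => Ω → Sum.elim (fun _ => S) (fun _ => T) i)
        X W i) P)
    (mθ : S → ℝ) (hmθ : ∀ s, mθ s = ∫ t, φ (s, t) ∂μ)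
    (mω : T → ℝ) (hmω : ∀ t, mω t = ∫ s, φ (s, t) ∂ρ) :
    (∫ ω, ((1 / ((N : ℝ) * (K : ℝ))) * ∑ i : Fin N, ∑ k : Fin K, φ (X i ω, W k ω)) ^ 2 ∂P)
      - (∫ ω, (1 / ((N : ℝ) * (K : ℝ))) * ∑ i : Fin N, ∑ k : Fin K, φ (X i ω, W k ω) ∂P) ^ 2
    = (1 / ((N : ℝ) * (K : ℝ))) *
        ((∫ p, (φ p) ^ 2 ∂(ρ.prod μ)) - (∫ p, φ p ∂(ρ.prod μ)) ^ 2)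
      + (1 / (N : ℝ) - 1 / ((N : ℝ) * (K : ℝ))) *
        ((∫ s, (mθ s) ^ 2 ∂ρ) - (∫ s, mθ s ∂ρ) ^ 2)
      + (1 / (K : ℝ) - 1 / ((N : ℝ) * (K : ℝ))) *
        ((∫ t, (mω t) ^ 2 ∂μ) - (∫ t, mω t ∂μ) ^ 2) := by
  classical
  obtain ⟨M₀, hM₀⟩ := hφ_bdd
  set M : ℝ := max M₀ 0 with hMdef
  have hM : ∀ p, |φ p| ≤ M := fun p => (hM₀ p).trans (le_max_left _ _)
  have hM0 : 0 ≤ M := le_max_right _ _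
  have hfm : ∀ j : Fin N ⊕ Fin K, @Measurable _ _ _
      (Sum.rec (motive := fun i => MeasurableSpace (Sum.elim (fun _ => S) (fun _ => T) i))
          (fun _ => (inferInstance : MeasurableSpace S))
          (fun _ => (inferInstance : MeasurableSpace T)) j)
      (Sum.rec (motive := fun i => Ω → Sum.elim (fun _ => S) (fun _ => T) i) X W j) := by
    rintro (i | k); exacts [(hX i).1, (hW k).1]
  -- joint laws
  have hpair : ∀ (i : Fin N) (k : Fin K),
      Measure.map (fun ω => (X i ω, W k ω)) P = ρ.prod μ := by
    intro i k
    have h : IndepFun (X i) (W k) P :=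
      hindep.indepFun (i := Sum.inl i) (j := Sum.inr k) (by simp)
    rw [(indepFun_iff_map_prod_eq_prod_map_map (hX i).1.aemeasurable
      (hW k).1.aemeasurable).mp h, (hX i).2, (hW k).2]
  have hWW : ∀ (k l : Fin K), k ≠ l →
      Measure.map (fun ω => (W k ω, W l ω)) P = μ.prod μ := by
    intro k l hkl
    have h : IndepFun (W k) (W l) P :=
      hindep.indepFun (i := Sum.inr k) (j := Sum.inr l) (by simp [hkl])
    rw [(indepFun_iff_map_prod_eq_prod_map_map (hW k).1.aemeasurable
      (hW l).1.aemeasurable).mp h, (hW k).2, (hW l).2]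
  have hXX : ∀ (i j : Fin N), i ≠ j →
      Measure.map (fun ω => (X i ω, X j ω)) P = ρ.prod ρ := by
    intro i j hij
    have h : IndepFun (X i) (X j) P :=
      hindep.indepFun (i := Sum.inl i) (j := Sum.inl j) (by simp [hij])
    rw [(indepFun_iff_map_prod_eq_prod_map_map (hX i).1.aemeasurable
      (hX j).1.aemeasurable).mp h, (hX i).2, (hX j).2]
  have htr1 : ∀ (i : Fin N) (k l : Fin K), k ≠ l →
      Measure.map (fun ω => (X i ω, (W k ω, W l ω))) P = ρ.prod (μ.prod μ) := by
    intro i k l hkl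
    have h : IndepFun (fun ω => (W k ω, W l ω)) (X i) P :=
      hindep.indepFun_prodMk hfm (Sum.inr k) (Sum.inr l) (Sum.inl i) (by simp) (by simp)
    have h2 := (indepFun_iff_map_prod_eq_prod_map_map ((hX i).1.aemeasurable)
      (((hW k).1.prodMk (hW l).1).aemeasurable)).mp h.symm
    rw [h2, (hX i).2, hWW k l hkl]
  have htr2 : ∀ (i j : Fin N) (k : Fin K), i ≠ j →
      Measure.map (fun ω => ((X i ω, X j ω), W k ω)) P = (ρ.prod ρ).prod μ := by
    intro i j k hij
    have h : IndepFun (fun ω => (X i ω, X j ω)) (W k) P :=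
      hindep.indepFun_prodMk hfm (Sum.inl i) (Sum.inl j) (Sum.inr k) (by simp) (by simp)
    have h2 := (indepFun_iff_map_prod_eq_prod_map_map
      (((hX i).1.prodMk (hX j).1).aemeasurable) ((hW k).1.aemeasurable)).mp h
    rw [h2, hXX i j hij, (hW k).2]
  have hquad : ∀ (i j : Fin N) (k l : Fin K), i ≠ j → k ≠ l →
      Measure.map (fun ω => ((X i ω, W k ω), (X j ω, W l ω))) P
        = (ρ.prod μ).prod (ρ.prod μ) := by
    intro i j k l hij hkl
    have h : IndepFun (fun ω => (X i ω, W k ω)) (fun ω => (X j ω, W l ω)) P :=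
      hindep.indepFun_prodMk_prodMk hfm (Sum.inl i) (Sum.inr k) (Sum.inl j) (Sum.inr l)
        (by simp [hij]) (by simp) (by simp) (by simp [hkl])
    have h2 := (indepFun_iff_map_prod_eq_prod_map_map
      (((hX i).1.prodMk (hW k).1).aemeasurable)
      (((hX j).1.prodMk (hW l).1).aemeasurable)).mp h
    rw [h2, hpair i k, hpair j l]
  -- abbreviations
  set Iφ : ℝ := ∫ p, φ p ∂(ρ.prod μ) with hIφ
  set Av : ℝ := ∫ p, (φ p) ^ 2 ∂(ρ.prod μ) with hAv
  set Bv : ℝ := ∫ s, (mθ s) ^ 2 ∂ρ with hBv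
  set Cv : ℝ := ∫ t, (mω t) ^ 2 ∂μ with hCv
  have hg_meas : ∀ (i : Fin N) (k : Fin K), Measurable (fun ω => φ (X i ω, W k ω)) :=
    fun i k => hφ_meas.comp ((hX i).1.prodMk (hW k).1)
  have hg_int : ∀ (i : Fin N) (k : Fin K), Integrable (fun ω => φ (X i ω, W k ω)) P :=
    fun i k => int_of_bdd P (hg_meas i k) (fun ω => hM _)
  have hmul_bd : ∀ (a b : S × T), |φ a * φ b| ≤ M * M := fun a b => by
    rw [abs_mul]; exact mul_le_mul (hM a) (hM b) (abs_nonneg _) hM0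
  have hgg_int : ∀ (i j : Fin N) (k l : Fin K),
      Integrable (fun ω => φ (X i ω, W k ω) * φ (X j ω, W l ω)) P :=
    fun i j k l => int_of_bdd P ((hg_meas i k).mul (hg_meas j l)) (fun ω => hmul_bd _ _)
  -- first moment
  have E1 : ∀ (i : Fin N) (k : Fin K), ∫ ω, φ (X i ω, W k ω) ∂P = Iφ := by
    intro i k
    rw [hIφ, ← hpair i k,
      integral_map ((hX i).1.prodMk (hW k).1).aemeasurable hφ_meas.aestronglyMeasurable]
  -- Fubini identities for the means
  have hφ_int : Integrable φ (ρ.prod μ) := int_of_bdd _ hφ_meas hM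
  have hImθ : ∫ s, mθ s ∂ρ = Iφ := by
    rw [hIφ, integral_prod _ hφ_int]; simp_rw [hmθ]
  have hImω : ∫ t, mω t ∂μ = Iφ := by
    rw [hIφ, integral_prod_symm _ hφ_int]; simp_rw [hmω]
  -- second moments
  have E2 : ∀ (i j : Fin N) (k l : Fin K),
      ∫ ω, φ (X i ω, W k ω) * φ (X j ω, W l ω) ∂P =
        (if i = j then (if k = l then Av else Bv) else (if k = l then Cv else Iφ * Iφ)) := by
    intro i j k l
    by_cases hij : i = j
    · subst hij
      by_cases hkl : k = l
      · subst hkl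
        simp only [if_pos rfl]
        have h1 : ∫ ω, φ (X i ω, W k ω) * φ (X i ω, W k ω) ∂P
            = ∫ p, φ p * φ p ∂(Measure.map (fun ω => (X i ω, W k ω)) P) :=
          (integral_map ((hX i).1.prodMk (hW k).1).aemeasurable
            (hφ_meas.mul hφ_meas).aestronglyMeasurable).symm
        rw [h1, hpair i k]
        simp [hAv, pow_two]
      · simp only [if_pos rfl, if_neg hkl]
        set F : S × (T × T) → ℝ := fun q => φ (q.1, q.2.1) * φ (q.1, q.2.2) with hF
        have hFmeas : Measurable F :=
          (hφ_meas.comp (measurable_fst.prodMk (measurable_fst.comp measurable_snd))).mul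
            (hφ_meas.comp (measurable_fst.prodMk (measurable_snd.comp measurable_snd)))
        have h1 : ∫ ω, φ (X i ω, W k ω) * φ (X i ω, W l ω) ∂P
            = ∫ q, F q ∂(Measure.map (fun ω => (X i ω, (W k ω, W l ω))) P) :=
          (integral_map ((hX i).1.prodMk ((hW k).1.prodMk (hW l).1)).aemeasurable
            hFmeas.aestronglyMeasurable).symm
        rw [h1, htr1 i k l hkl,
          integral_prod _ (int_of_bdd _ hFmeas (C := M * M) (fun q => hmul_bd _ _)), hBv]
        refine integral_congr_ae (Filter.Eventually.of_forall fun s => ?_)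
        have h2 := integral_prod_mul (μ := μ) (ν := μ)
          (f := fun t => φ (s, t)) (g := fun t => φ (s, t))
        simp only [hF]
        rw [h2, hmθ, pow_two]
    · by_cases hkl : k = l
      · subst hkl
        simp only [if_neg hij, if_pos rfl]
        set F : (S × S) × T → ℝ := fun q => φ (q.1.1, q.2) * φ (q.1.2, q.2) with hF
        have hFmeas : Measurable F :=
          (hφ_meas.comp ((measurable_fst.comp measurable_fst).prodMk measurable_snd)).mul
            (hφ_meas.comp ((measurable_snd.comp measurable_fst).prodMk measurable_snd))
        have h1 : ∫ ω, φ (X i ω, W k ω) * φ (X j ω, W k ω) ∂P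
            = ∫ q, F q ∂(Measure.map (fun ω => ((X i ω, X j ω), W k ω)) P) :=
          (integral_map (((hX i).1.prodMk (hX j).1).prodMk (hW k).1).aemeasurable
            hFmeas.aestronglyMeasurable).symm
        rw [h1, htr2 i j k hij,
          integral_prod_symm _ (int_of_bdd _ hFmeas (C := M * M) (fun q => hmul_bd _ _)), hCv]
        refine integral_congr_ae (Filter.Eventually.of_forall fun t => ?_)
        have h2 := integral_prod_mul (μ := ρ) (ν := ρ)
          (f := fun s => φ (s, t)) (g := fun s => φ (s, t))
        simp only [hF]
        rw [h2, hmω, pow_two]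
      · simp only [if_neg hij, if_neg hkl]
        set F : (S × T) × (S × T) → ℝ := fun q => φ q.1 * φ q.2 with hF
        have hFmeas : Measurable F :=
          (hφ_meas.comp measurable_fst).mul (hφ_meas.comp measurable_snd)
        have h1 : ∫ ω, φ (X i ω, W k ω) * φ (X j ω, W l ω) ∂P
            = ∫ q, F q ∂(Measure.map (fun ω => ((X i ω, W k ω), (X j ω, W l ω))) P) :=
          (integral_map (((hX i).1.prodMk (hW k).1).prodMk
            ((hX j).1.prodMk (hW l).1)).aemeasurable hFmeas.aestronglyMeasurable).symm
        rw [h1, hquad i j k l hij hkl]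
        exact integral_prod_mul (f := φ) (g := φ)
  -- expectation of the estimator
  have hN' : ((N:ℝ)) ≠ 0 := Nat.cast_ne_zero.mpr (by omega)
  have hK' : ((K:ℝ)) ≠ 0 := Nat.cast_ne_zero.mpr (by omega)
  have hKsum : ∀ i : Fin N, ∫ ω, ∑ k : Fin K, φ (X i ω, W k ω) ∂P = K * Iφ := by
    intro i
    rw [integral_finset_sum _ (fun k _ => hg_int i k)]
    simp [E1, Finset.sum_const]
  have hlin : ∫ ω, (1 / ((N:ℝ) * (K:ℝ))) * ∑ i : Fin N, ∑ k : Fin K, φ (X i ω, W k ω) ∂P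
      = (1 / ((N:ℝ) * (K:ℝ))) * ((N:ℝ) * (K:ℝ) * Iφ) := by
    rw [integral_const_mul]
    congr 1
    rw [integral_finset_sum _ (fun i _ => integrable_finset_sum _ (fun k _ => hg_int i k))]
    simp [hKsum, Finset.sum_const]
    ring
  -- second moment of the estimator
  have hS : ∀ ω : Ω, (∑ i : Fin N, ∑ k : Fin K, φ (X i ω, W k ω))
      = ∑ p : Fin N × Fin K, φ (X p.1 ω, W p.2 ω) :=
    fun ω => (Fintype.sum_prod_type (f := fun p : Fin N × Fin K => φ (X p.1 ω, W p.2 ω))).symm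
  have hsq : ∫ ω, ((1 / ((N:ℝ) * (K:ℝ))) * ∑ i : Fin N, ∑ k : Fin K, φ (X i ω, W k ω)) ^ 2 ∂P
      = (1 / ((N:ℝ) * (K:ℝ)))^2 *
          ((N:ℝ) * ((K:ℝ) * Av + ((K:ℝ)^2 - (K:ℝ)) * Bv)
            + ((N:ℝ)^2 - (N:ℝ)) * ((K:ℝ) * Cv + ((K:ℝ)^2 - (K:ℝ)) * (Iφ * Iφ))) := by
    simp_rw [mul_pow, hS, integral_const_mul]
    congr 1
    have expand : ∀ ω : Ω, (∑ p : Fin N × Fin K, φ (X p.1 ω, W p.2 ω)) ^ 2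
        = ∑ p : Fin N × Fin K, ∑ q : Fin N × Fin K,
            φ (X p.1 ω, W p.2 ω) * φ (X q.1 ω, W q.2 ω) := by
      intro ω; rw [pow_two, Finset.sum_mul_sum]
    simp_rw [expand]
    rw [integral_finset_sum _
      (fun p _ => integrable_finset_sum _ (fun q _ => hgg_int p.1 q.1 p.2 q.2))]
    have hstep : ∀ p : Fin N × Fin K,
        ∫ ω, ∑ q : Fin N × Fin K, φ (X p.1 ω, W p.2 ω) * φ (X q.1 ω, W q.2 ω) ∂P
          = ∑ q : Fin N × Fin K, (if p.1 = q.1 then (if p.2 = q.2 then Av else Bv)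
              else (if p.2 = q.2 then Cv else Iφ * Iφ)) := by
      intro p
      rw [integral_finset_sum _ (fun q _ => hgg_int p.1 q.1 p.2 q.2)]
      exact Finset.sum_congr rfl fun q _ => E2 p.1 q.1 p.2 q.2
    simp_rw [hstep]
    rw [Fintype.sum_prod_type]
    have hswap : ∀ i : Fin N, ∑ k : Fin K, ∑ q : Fin N × Fin K,
        (if i = q.1 then (if k = q.2 then Av else Bv) else (if k = q.2 then Cv else Iφ * Iφ))
        = ∑ j : Fin N, ∑ k : Fin K, ∑ l : Fin K,
            (if i = j then (if k = l then Av else Bv) else (if k = l then Cv else Iφ * Iφ)) := by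
      intro i
      simp_rw [Fintype.sum_prod_type]
      exact Finset.sum_comm
    simp_rw [hswap]
    have hinner : ∀ i j : Fin N, ∑ k : Fin K, ∑ l : Fin K,
        (if i = j then (if k = l then Av else Bv) else (if k = l then Cv else Iφ * Iφ))
        = if i = j then ((K:ℝ) * Av + ((K:ℝ)^2 - (K:ℝ)) * Bv)
            else ((K:ℝ) * Cv + ((K:ℝ)^2 - (K:ℝ)) * (Iφ * Iφ)) := by
      intro i j
      by_cases h : i = j <;> simp only [h, if_pos rfl, if_neg, if_true, if_false] <;> rw [cnt]
    simp_rw [hinner]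
    rw [cnt]
  rw [hlin, hsq, hImθ, hImω]
  field_simp
  ring
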